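/- Under the side conditions p∘i = id, H∘i = 0, p∘H = 0, H² = 0 for homotopy data (i, p, H) between a unital A∞-algebra (A,m) and a complex (V,d), and assuming i(e_V) = e_A, the transferred A∞-operations η_k of the homological perturbation lemma satisfy η_{k+1}(v₁,...,e_V,...,v_k) = p(m_{k+1}(i(v₁),...,e_A,...,i(v_k))); in particular e_V is a strict unit for the transferred structure. -/

import Mathlib

/-- Planar rooted trees: a tree is a leaf or an (internal) node with an ordered list
of subtrees. -/
inductive PTree : Type
  | leaf : PTree
  | node : List PTree → PTree

mutual
  /-- Number of leaves of a planar tree. -/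
  def PTree.nleaves : PTree → ℕ
    | .leaf => 1
    | .node ts => PTree.nleavesL ts
  /-- Number of leaves of a list of planar trees. -/
  def PTree.nleavesL : List PTree → ℕ
    | [] => 0
    | t :: ts => t.nleaves + PTree.nleavesL ts
end

mutual
  /-- The trees appearing in the homological perturbation lemma for a flat A∞-algebra:
  every internal vertex has valency at least `2`. -/
  def PTree.good : PTree → Bool
    | .leaf => true
    | .node ts => decide (2 ≤ ts.length) && PTree.goodL ts
  def PTree.goodL : List PTree → Bool
    | [] => true
    | t :: ts => t.good && PTree.goodL ts
end

section Eval

variable {V A : Type*} [AddCommGroup A]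
variable (m : ∀ k : ℕ, (Fin k → A) → A) (iV : V → A) (Hh : A → A)

mutual
  /-- Evaluation of a tree as a flow chart: `m_{val(v)}` at each internal vertex, `H` at
  each internal edge, `i` at the leaves (no `p` or `H` applied at the root). -/
  noncomputable def PTree.evalT : PTree → List V → A
    | .leaf, vs => (match vs with | [] => 0 | v :: _ => iV v)
    | .node ts, vs => m ts.length (fun j => (PTree.evalChildren ts vs).getD j.val 0)
  /-- Evaluation of the children of a vertex, applying `H` on internal edges. -/
  noncomputable def PTree.evalChildren : List PTree → List V → List A
    | [], _ => []
    | .leaf :: ts, vs =>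
        (match vs with | [] => 0 | v :: _ => iV v) :: PTree.evalChildren ts (vs.drop 1)
    | .node cs :: ts, vs =>
        Hh (PTree.evalT (.node cs) (vs.take (PTree.nleavesL cs))) ::
          PTree.evalChildren ts (vs.drop (PTree.nleavesL cs))
end

end Eval
namespace PTreeAux

@[simp] theorem nleaves_leaf : PTree.nleaves .leaf = 1 := by rw [PTree.nleaves]
@[simp] theorem nleaves_node (ts : List PTree) : PTree.nleaves (.node ts) = PTree.nleavesL ts := by
  rw [PTree.nleaves]
@[simp] theorem nleavesL_nil : PTree.nleavesL [] = 0 := by rw [PTree.nleavesL]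
@[simp] theorem nleavesL_cons (t : PTree) (ts : List PTree) :
    PTree.nleavesL (t :: ts) = t.nleaves + PTree.nleavesL ts := by rw [PTree.nleavesL]

@[simp] theorem goodL_nil : PTree.goodL [] = true := by rw [PTree.goodL]
@[simp] theorem goodL_cons (t : PTree) (ts : List PTree) :
    PTree.goodL (t :: ts) = (t.good && PTree.goodL ts) := by rw [PTree.goodL]
@[simp] theorem good_leaf : PTree.good .leaf = true := by rw [PTree.good]
@[simp] theorem good_node (ts : List PTree) :
    PTree.good (.node ts) = (decide (2 ≤ ts.length) && PTree.goodL ts) := by rw [PTree.good]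

section
variable {V A : Type*} [AddCommGroup A]
variable (m : ∀ k : ℕ, (Fin k → A) → A) (iV : V → A) (Hh : A → A)

@[simp] theorem evalT_node (ts : List PTree) (L : List V) :
    PTree.evalT m iV Hh (.node ts) L =
      m ts.length (fun j => (PTree.evalChildren m iV Hh ts L).getD j.val 0) := by
  rw [PTree.evalT]

@[simp] theorem evalT_leaf_cons (v : V) (L : List V) :
    PTree.evalT m iV Hh .leaf (v :: L) = iV v := by rw [PTree.evalT]

@[simp] theorem ec_nil (L : List V) : PTree.evalChildren m iV Hh [] L = [] := by
  rw [PTree.evalChildren.eq_def]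

@[simp] theorem ec_leaf_cons (ts : List PTree) (v : V) (L : List V) :
    PTree.evalChildren m iV Hh (.leaf :: ts) (v :: L) =
      iV v :: PTree.evalChildren m iV Hh ts L := by
  rw [PTree.evalChildren]; simp

@[simp] theorem ec_node_cons (cs ts : List PTree) (L : List V) :
    PTree.evalChildren m iV Hh (.node cs :: ts) L =
      Hh (PTree.evalT m iV Hh (.node cs) (L.take (PTree.nleavesL cs))) ::
        PTree.evalChildren m iV Hh ts (L.drop (PTree.nleavesL cs)) := by
  rw [PTree.evalChildren]

end
end PTreeAux
namespace PTreeAux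
mutual
theorem good_one : ∀ t : PTree, t.good = true → 1 ≤ t.nleaves
  | .leaf, _ => le_refl 1
  | .node ts, h => by
      simp only [good_node, Bool.and_eq_true, decide_eq_true_eq] at h
      have := goodL_len ts h.2
      simpa using by omega
theorem goodL_len : ∀ ts : List PTree, PTree.goodL ts = true → ts.length ≤ PTree.nleavesL ts
  | [], _ => le_refl 0
  | t :: ts, h => by
      simp only [goodL_cons, Bool.and_eq_true] at h
      have := good_one t h.1
      have := goodL_len ts h.2
      simp only [nleavesL_cons, List.length_cons]
      omega
end

theorem nleavesL_append : ∀ ts1 ts2 : List PTree,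
    PTree.nleavesL (ts1 ++ ts2) = PTree.nleavesL ts1 + PTree.nleavesL ts2 := by
  intro ts1 ts2
  induction ts1 with
  | nil => simp
  | cons t ts ih => simp [ih]; omega

theorem goodL_append {ts1 ts2 : List PTree} (h : PTree.goodL (ts1 ++ ts2) = true) :
    PTree.goodL ts1 = true ∧ PTree.goodL ts2 = true := by
  induction ts1 with
  | nil => exact ⟨rfl, h⟩
  | cons t ts ih =>
    simp only [List.cons_append, goodL_cons, Bool.and_eq_true] at h ⊢
    exact ⟨⟨h.1, (ih h.2).1⟩, (ih h.2).2⟩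

theorem nleavesL_leaves : ∀ ts : List PTree, (∀ c ∈ ts, c = .leaf) →
    PTree.nleavesL ts = ts.length := by
  intro ts
  induction ts with
  | nil => intro; rfl
  | cons t ts ih =>
    intro h
    have ht : t = .leaf := h t (by simp)
    subst ht
    simp [ih (fun c hc => h c (by simp [hc]))]
    omega

theorem locate : ∀ (ts : List PTree) (j : ℕ), j < PTree.nleavesL ts →
    ∃ ts1 c ts2, ts = ts1 ++ c :: ts2 ∧ PTree.nleavesL ts1 ≤ j ∧
      j < PTree.nleavesL ts1 + c.nleaves := by
  intro ts
  induction ts with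
  | nil => intro j h; simp at h
  | cons t ts ih =>
    intro j h
    simp only [nleavesL_cons] at h
    by_cases hj : j < t.nleaves
    · exact ⟨[], t, ts, rfl, by simp, by simpa using hj⟩
    · obtain ⟨ts1, c, ts2, he, hl, hr⟩ := ih (j - t.nleaves) (by omega)
      exact ⟨t :: ts1, c, ts2, by rw [he, List.cons_append],
        by simp; omega, by simp; omega⟩

theorem getD_append_len {α : Type*} : ∀ (P : List α) (y : α) (Q : List α) (d : α),
    (P ++ y :: Q).getD P.length d = y := by
  intro P y Q d
  induction P with
  | nil => rfl
  | cons p P ih => simpa using ih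

end PTreeAux
namespace PTreeAux

section
variable {V A : Type*} [AddCommGroup A]
set_option linter.unusedSectionVars false
variable (m : ∀ k : ℕ, (Fin k → A) → A) (iV : V → A) (Hh : A → A)

theorem ec_append : ∀ (ts1 ts2 : List PTree) (L : List V),
    PTree.evalChildren m iV Hh (ts1 ++ ts2) L =
      PTree.evalChildren m iV Hh ts1 L ++
        PTree.evalChildren m iV Hh ts2 (L.drop (PTree.nleavesL ts1)) := by
  intro ts1
  induction ts1 with
  | nil => intro ts2 L; simp
  | cons t ts ih =>
    intro ts2 L
    cases t with
    | leaf =>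
      match L with
      | [] =>
        rw [List.cons_append, PTree.evalChildren, PTree.evalChildren]
        simp [ih]
      | v :: L' =>
        simp [ih, List.drop_drop]
        rw [show 1 + PTree.nleavesL ts = PTree.nleavesL ts + 1 by omega, List.drop_succ_cons]
    | node cs =>
      simp [ih, List.drop_drop]

theorem ec_length : ∀ (ts : List PTree) (L : List V),
    (PTree.evalChildren m iV Hh ts L).length = ts.length := by
  intro ts
  induction ts with
  | nil => intro L; simp
  | cons t ts ih =>
    intro L
    cases t with
    | leaf =>
      match L with
      | [] => rw [PTree.evalChildren]; simp [ih]
      | v :: L' => simp [ih]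
    | node cs => simp [ih]

theorem ec_leaves : ∀ (ts : List PTree), (∀ c ∈ ts, c = .leaf) → ∀ L : List V,
    ts.length ≤ L.length →
    PTree.evalChildren m iV Hh ts L = (L.take ts.length).map iV := by
  intro ts
  induction ts with
  | nil => intro _ L _; simp
  | cons t ts ih =>
    intro h L hL
    have ht : t = .leaf := h t (by simp)
    subst ht
    match L with
    | [] => simp at hL
    | v :: L' =>
      rw [ec_leaf_cons, ih (fun c hc => h c (by simp [hc])) L' (by simpa using hL)]
      simp

theorem evalT_leaves (ts : List PTree) (h : ∀ c ∈ ts, c = .leaf) (L : List V)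
    (hL : ts.length ≤ L.length) [AddCommGroup V] :
    PTree.evalT m iV Hh (.node ts) L =
      m ts.length (fun j : Fin ts.length => iV (L.getD j.val 0)) := by
  rw [evalT_node, ec_leaves m iV Hh ts h L hL]
  congr 1
  funext j
  have h1 : j.val < ((L.take ts.length).map iV).length := by
    simp [List.length_take]; omega
  have h2 : j.val < L.length := by omega
  rw [List.getD_eq_getElem _ _ h1, List.getD_eq_getElem _ _ h2, List.getElem_map,
    List.getElem_take]

end

theorem m_congr {A : Type*} (m : ∀ k : ℕ, (Fin k → A) → A) {a b : ℕ} (h : a = b)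
    (x : Fin a → A) (y : Fin b → A) (hxy : ∀ j : Fin b, x (Fin.cast h.symm j) = y j) :
    m a x = m b y := by
  subst h
  congr 1
  funext j
  exact hxy j

theorem m_zero {A : Type*} [AddCommGroup A] (m : ∀ k : ℕ, (Fin k → A) → A)
    (hm_add : ∀ (k : ℕ) (x : Fin k → A) (i : Fin k) (a b : A),
      m k (Function.update x i (a + b)) =
        m k (Function.update x i a) + m k (Function.update x i b))
    (k : ℕ) (x : Fin k → A) (i : Fin k) (hx : x i = 0) : m k x = 0 := by
  have h := hm_add k x i 0 0
  rw [add_zero] at h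
  rw [← hx, Function.update_eq_self] at h
  exact left_eq_add.mp h

end PTreeAux
namespace PTreeAux

theorem key {V A : Type*} [AddCommGroup V] [AddCommGroup A]
    (m : ∀ k : ℕ, (Fin k → A) → A) (g : A → ℤ)
    (iV : V →+ A) (Hh : A →+ A) (eA : A) (eV : V)
    (hm_add : ∀ (k : ℕ) (x : Fin k → A) (i : Fin k) (a b : A),
      m k (Function.update x i (a + b)) =
        m k (Function.update x i a) + m k (Function.update x i b))
    (hunit_l : ∀ a : A, m 2 ![eA, a] = a)
    (hunit_r : ∀ a : A, m 2 ![a, eA] = (Int.negOnePow (g a) : ℤ) • a)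
    (hunit_k : ∀ (k : ℕ) (x : Fin k → A) (i : Fin k), k ≠ 2 → x i = eA → m k x = 0)
    (hie : iV eV = eA)
    (hHi : ∀ v : V, Hh (iV v) = 0)
    (hHH : ∀ a : A, Hh (Hh a) = 0) :
    ∀ N : ℕ, ∀ t : PTree, t.good = true → t.nleaves ≤ N →
      ∀ xs ys : List V, xs.length < t.nleaves →
        t.nleaves ≤ xs.length + 1 + ys.length →
        Hh (PTree.evalT m (⇑iV) (⇑Hh) t (xs ++ eV :: ys)) = 0 ∧
        ∀ ts, t = .node ts →
          ((∀ c ∈ ts, c = .leaf) ∨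
            ∃ (s : ℤ) (z : A),
              PTree.evalT m (⇑iV) (⇑Hh) t (xs ++ eV :: ys) = s • Hh z) := by
  intro N
  induction N with
  | zero =>
    intro t hg hN xs ys hxs hlen
    have := good_one t hg
    omega
  | succ N IH =>
    intro t hg hN xs ys hxs hlen
    cases t with
    | leaf =>
      have hx0 : xs = [] := List.eq_nil_of_length_eq_zero (by simpa using hxs)
      subst hx0
      refine ⟨?_, fun ts h => by cases h⟩
      simpa using hHi eV
    | node ts =>
      have hgood : 2 ≤ ts.length ∧ PTree.goodL ts = true := by
        simpa [Bool.and_eq_true, decide_eq_true_eq] using hg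
      simp only [nleaves_node] at hxs hN hlen
      have hD : (∀ c ∈ ts, c = PTree.leaf) ∨
          ∃ (s : ℤ) (z : A),
            PTree.evalT m (⇑iV) (⇑Hh) (.node ts) (xs ++ eV :: ys) = s • Hh z := by
        by_cases hall : ∀ c ∈ ts, c = PTree.leaf
        · exact Or.inl hall
        right
        obtain ⟨ts1, c, ts2, hts, h1, h2⟩ := locate ts xs.length hxs
        subst hts
        have hlen1 : PTree.nleavesL (ts1 ++ c :: ts2) =
            PTree.nleavesL ts1 + (c.nleaves + PTree.nleavesL ts2) := by
          rw [nleavesL_append, nleavesL_cons]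
        have hgds := goodL_append hgood.2
        have hgc : c.good = true ∧ PTree.goodL ts2 = true := by
          have := hgds.2
          simp only [goodL_cons, Bool.and_eq_true] at this
          exact this
        have hl1 : ts1.length ≤ PTree.nleavesL ts1 := goodL_len ts1 hgds.1
        have hl2 : ts2.length ≤ PTree.nleavesL ts2 := goodL_len ts2 hgc.2
        have hc1 : 1 ≤ c.nleaves := good_one c hgc.1
        have hlen2 : (ts1 ++ c :: ts2).length = ts1.length + ts2.length + 1 := by
          simp; omega
        have hjlt : ts1.length < (ts1 ++ c :: ts2).length := by simp
        have hdrop : (xs ++ eV :: ys).drop (PTree.nleavesL ts1) =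
            xs.drop (PTree.nleavesL ts1) ++ eV :: ys := by
          rw [List.drop_append,
            show PTree.nleavesL ts1 - xs.length = 0 by omega, List.drop_zero]
        have hEC : PTree.evalChildren m (⇑iV) (⇑Hh) (ts1 ++ c :: ts2) (xs ++ eV :: ys) =
            PTree.evalChildren m (⇑iV) (⇑Hh) ts1 (xs ++ eV :: ys) ++
            PTree.evalChildren m (⇑iV) (⇑Hh) (c :: ts2)
              (xs.drop (PTree.nleavesL ts1) ++ eV :: ys) := by
          rw [ec_append, hdrop]
        have hEClen : (PTree.evalChildren m (⇑iV) (⇑Hh) ts1 (xs ++ eV :: ys)).length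
            = ts1.length := ec_length ..
        cases c with
        | node cs =>
          simp only [nleaves_node] at h2 hc1 hlen1
          have hxs' : (xs.drop (PTree.nleavesL ts1)).length =
              xs.length - PTree.nleavesL ts1 := by simp
          have htake : (xs.drop (PTree.nleavesL ts1) ++ eV :: ys).take (PTree.nleavesL cs) =
              xs.drop (PTree.nleavesL ts1) ++ eV ::
                ys.take (PTree.nleavesL cs - (xs.length - PTree.nleavesL ts1) - 1) := by
            rw [List.take_append, List.take_of_length_le (by omega)]
            congr 1
            rw [hxs', show PTree.nleavesL cs - (xs.length - PTree.nleavesL ts1) =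
              (PTree.nleavesL cs - (xs.length - PTree.nleavesL ts1) - 1) + 1 by omega,
              List.take_succ_cons]
            simp
          have hIH := IH (.node cs) hgc.1 (by simp only [nleaves_node]; omega)
            (xs.drop (PTree.nleavesL ts1))
            (ys.take (PTree.nleavesL cs - (xs.length - PTree.nleavesL ts1) - 1))
            (by simp only [nleaves_node]; omega)
            (by simp only [nleaves_node, List.length_take, List.length_drop]; omega)
          have hE0 : PTree.evalT m (⇑iV) (⇑Hh) (.node (ts1 ++ .node cs :: ts2))
              (xs ++ eV :: ys) = 0 := by
            rw [evalT_node]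
            apply m_zero m hm_add _ _ ⟨ts1.length, hjlt⟩
            show (PTree.evalChildren m (⇑iV) (⇑Hh) (ts1 ++ .node cs :: ts2)
              (xs ++ eV :: ys)).getD ts1.length 0 = 0
            rw [hEC, ec_node_cons, htake, ← hEClen, getD_append_len]
            exact hIH.1
          exact ⟨0, 0, by rw [hE0]; simp⟩
        | leaf =>
          simp only [nleaves_leaf] at h2 hlen1
          have hx1 : xs.length = PTree.nleavesL ts1 := by omega
          have hdrop0 : xs.drop (PTree.nleavesL ts1) = [] := by
            rw [← hx1, List.drop_length]
          rw [hdrop0] at hEC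
          have hFj : (PTree.evalChildren m (⇑iV) (⇑Hh) (ts1 ++ .leaf :: ts2)
              (xs ++ eV :: ys)).getD ts1.length 0 = eA := by
            rw [hEC, List.nil_append, ec_leaf_cons, ← hEClen, getD_append_len]
            exact hie
          by_cases hr2 : (ts1 ++ PTree.leaf :: ts2).length = 2
          · have hlsum : ts1.length + ts2.length = 1 := by omega
            cases ts1 with
            | nil =>
              match ts2, hlsum with
              | [b], _ =>
                have hb : b ≠ PTree.leaf := by
                  intro hb
                  exact hall (by subst hb; simp)
                cases b with
                | leaf => exact absurd rfl hb
                | node cs =>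
                  have hx0 : xs = [] := by
                    apply List.eq_nil_of_length_eq_zero; simpa using hx1
                  subst hx0
                  refine ⟨1, PTree.evalT m (⇑iV) (⇑Hh) (.node cs)
                    (ys.take (PTree.nleavesL cs)), ?_⟩
                  have hE : PTree.evalT m (⇑iV) (⇑Hh)
                      (.node ([] ++ PTree.leaf :: [PTree.node cs])) ([] ++ eV :: ys) =
                      m 2 ![eA, Hh (PTree.evalT m (⇑iV) (⇑Hh) (.node cs)
                        (ys.take (PTree.nleavesL cs)))] := by
                    rw [evalT_node]
                    congr 1
                    funext j
                    fin_cases j <;> simp [hie]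
                  rw [hE, hunit_l, one_smul]
            | cons a ts1' =>
              have h10 : ts1' = [] ∧ ts2 = [] := by
                constructor <;> (apply List.eq_nil_of_length_eq_zero; simp at hlsum; omega)
              obtain ⟨rfl, rfl⟩ := h10
              have ha : a ≠ PTree.leaf := by
                intro hb
                exact hall (by subst hb; simp)
              cases a with
              | leaf => exact absurd rfl ha
              | node cs =>
                have hx1' : PTree.nleavesL cs = xs.length := by
                  simp at hx1; omega
                refine ⟨(Int.negOnePow (g (Hh (PTree.evalT m (⇑iV) (⇑Hh) (.node cs) xs))) : ℤ),
                  PTree.evalT m (⇑iV) (⇑Hh) (.node cs) xs, ?_⟩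
                have hE : PTree.evalT m (⇑iV) (⇑Hh)
                    (.node ([PTree.node cs] ++ PTree.leaf :: [])) (xs ++ eV :: ys) =
                    m 2 ![Hh (PTree.evalT m (⇑iV) (⇑Hh) (.node cs) xs), eA] := by
                  rw [evalT_node]
                  congr 1
                  funext j
                  have htk : (xs ++ eV :: ys).take (PTree.nleavesL cs) = xs := by
                    rw [hx1']
                    exact List.take_left
                  have hdr : (xs ++ eV :: ys).drop (PTree.nleavesL cs) = eV :: ys := by
                    rw [hx1']
                    exact List.drop_left
                  fin_cases j <;> simp [htk, hdr, hie]
                rw [hE, hunit_r]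
          · have hE0 : PTree.evalT m (⇑iV) (⇑Hh) (.node (ts1 ++ .leaf :: ts2))
                (xs ++ eV :: ys) = 0 := by
              rw [evalT_node]
              exact hunit_k _ _ ⟨ts1.length, hjlt⟩ hr2 hFj
            exact ⟨0, 0, by rw [hE0]; simp⟩
      refine ⟨?_, fun ts' h => by injection h with h'; subst h'; exact hD⟩
      rcases hD with hall | ⟨s, z, hz⟩
      · have hlen' : PTree.nleavesL ts = ts.length := nleavesL_leaves ts hall
        have hE := evalT_leaves m (⇑iV) (⇑Hh) ts hall (xs ++ eV :: ys)
          (by simp; omega)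
        by_cases h2 : ts.length = 2
        · match xs, (by omega : xs.length < 2) with
          | [], _ =>
            rw [hE, m_congr m h2 _ ![eA, iV (ys.getD 0 0)] ?_, hunit_l]
            · exact hHi _
            · intro j
              fin_cases j <;> simp [hie]
          | [x], _ =>
            rw [hE, m_congr m h2 _ ![iV x, eA] ?_, hunit_r, map_zsmul, hHi, smul_zero]
            intro j
            fin_cases j <;> simp [hie]
        · have hFj : (fun j : Fin ts.length =>
              iV ((xs ++ eV :: ys).getD j.val 0)) ⟨xs.length, by omega⟩ = eA := by
            show iV ((xs ++ eV :: ys).getD xs.length 0) = eA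
            rw [getD_append_len]
            exact hie
          rw [hE, hunit_k _ _ ⟨xs.length, by omega⟩ h2 hFj, map_zero]
      · rw [hz, map_zsmul, hHH, smul_zero]

end PTreeAux
namespace PTreeAux
theorem goodL_replicate (n : ℕ) : PTree.goodL (List.replicate n .leaf) = true := by
  induction n with
  | zero => simp
  | succ n ih => simp [List.replicate_succ, ih]
end PTreeAux

open PTreeAux in
theorem stmt9' {V A : Type*} [AddCommGroup V] [AddCommGroup A]
    (m : ∀ k : ℕ, (Fin k → A) → A) (g : A → ℤ)
    (iV : V →+ A) (pA : A →+ V) (Hh : A →+ A) (dV : V →+ V)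
    (eA : A) (eV : V)
    (hm_add : ∀ (k : ℕ) (x : Fin k → A) (i : Fin k) (a b : A),
      m k (Function.update x i (a + b)) =
        m k (Function.update x i a) + m k (Function.update x i b))
    (hunit_l : ∀ a : A, m 2 ![eA, a] = a)
    (hunit_r : ∀ a : A, m 2 ![a, eA] = (Int.negOnePow (g a) : ℤ) • a)
    (hunit_k : ∀ (k : ℕ) (x : Fin k → A) (i : Fin k), k ≠ 2 → x i = eA → m k x = 0)
    (hie : iV eV = eA)
    (hpi : ∀ v : V, pA (iV v) = v)
    (hHi : ∀ v : V, Hh (iV v) = 0)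
    (hpH : ∀ a : A, pA (Hh a) = 0)
    (hHH : ∀ a : A, Hh (Hh a) = 0)
    (k : ℕ) (𝒯 : Finset PTree)
    (h𝒯 : ∀ t : PTree, t ∈ 𝒯 ↔
      (t.good = true ∧ t.nleaves = k + 1 ∧ ∃ ts, t = PTree.node ts))
    (vs : Fin k → V) (pos : Fin (k + 1)) :
    (∑ t ∈ 𝒯, pA (PTree.evalT m (⇑iV) (⇑Hh) t (List.ofFn (Fin.insertNth pos eV vs)))) =
      pA (m (k + 1) (Fin.insertNth pos eA (fun j => iV (vs j)))) := by
  classical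
  have hLlen : (List.ofFn (Fin.insertNth pos eV vs)).length = k + 1 := by simp
  have hposlt : (pos : ℕ) < k + 1 := pos.isLt
  have hget : (List.ofFn (Fin.insertNth pos eV vs))[(pos : ℕ)]'(by omega) = eV := by
    rw [List.getElem_ofFn, Fin.eta, Fin.insertNth_apply_same]
  have hsplit : List.ofFn (Fin.insertNth pos eV vs) =
      (List.ofFn (Fin.insertNth pos eV vs)).take (pos : ℕ) ++
        eV :: (List.ofFn (Fin.insertNth pos eV vs)).drop ((pos : ℕ) + 1) := by
    conv_lhs => rw [← List.take_append_drop (pos : ℕ) (List.ofFn (Fin.insertNth pos eV vs))]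
    congr 1
    rw [List.drop_eq_getElem_cons (by omega), hget]
  have hxsl : ((List.ofFn (Fin.insertNth pos eV vs)).take (pos : ℕ)).length = (pos : ℕ) := by
    simp [List.length_take]
  have hysl : ((List.ofFn (Fin.insertNth pos eV vs)).drop ((pos : ℕ) + 1)).length
      = k - (pos : ℕ) := by
    simp [List.length_drop]
  have hcomp : ∀ j : Fin (k + 1), iV ((Fin.insertNth pos eV vs : Fin (k + 1) → V) j) =
      (Fin.insertNth pos eA (fun j => iV (vs j)) : Fin (k + 1) → A) j := by
    intro j
    by_cases hj : j = pos
    · subst hj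
      simp [hie]
    · obtain ⟨i, rfl⟩ := Fin.exists_succAbove_eq hj
      rw [Fin.insertNth_apply_succAbove, Fin.insertNth_apply_succAbove]
  have hval : ∀ t ∈ 𝒯, pA (PTree.evalT m (⇑iV) (⇑Hh) t (List.ofFn (Fin.insertNth pos eV vs)))
      = if t = PTree.node (List.replicate (k + 1) PTree.leaf) then
          pA (m (k + 1) (Fin.insertNth pos eA (fun j => iV (vs j)))) else 0 := by
    intro t ht
    obtain ⟨hg, hn, ts, rfl⟩ := (h𝒯 t).mp ht
    simp only [nleaves_node] at hn
    by_cases hc : ∀ c ∈ ts, c = PTree.leaf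
    · have hlts : ts.length = k + 1 := by rw [← nleavesL_leaves ts hc]; exact hn
      have ht0 : PTree.node ts = PTree.node (List.replicate (k + 1) PTree.leaf) := by
        congr 1
        exact List.eq_replicate_iff.mpr ⟨hlts, hc⟩
      rw [if_pos ht0]
      rw [evalT_leaves m (⇑iV) (⇑Hh) ts hc _ (by omega)]
      congr 1
      refine m_congr m hlts _ _ ?_
      intro j
      show iV ((List.ofFn (Fin.insertNth pos eV vs)).getD j.val 0) = _
      rw [List.getD_eq_getElem _ _ (by omega), List.getElem_ofFn]
      rw [show (⟨j.val, by omega⟩ : Fin (k + 1)) = j from rfl]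
      exact hcomp j
    · have hne : PTree.node ts ≠ PTree.node (List.replicate (k + 1) PTree.leaf) := by
        intro he
        injection he with he'
        exact hc (fun c hcm => List.eq_of_mem_replicate (he' ▸ hcm))
      rw [if_neg hne]
      have hk := key m g iV Hh eA eV hm_add hunit_l hunit_r hunit_k hie hHi hHH
        (k + 1) (.node ts) hg (by simp [hn])
        ((List.ofFn (Fin.insertNth pos eV vs)).take (pos : ℕ))
        ((List.ofFn (Fin.insertNth pos eV vs)).drop ((pos : ℕ) + 1))
        (by simp [hn, hxsl]; omega) (by simp [hn, hxsl, hysl]; omega)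
      rcases hk.2 ts rfl with h | ⟨s, z, hz⟩
      · exact absurd h hc
      · rw [hsplit, hz, map_zsmul, hpH, smul_zero]
  rw [Finset.sum_congr rfl hval, Finset.sum_ite_eq' 𝒯 _ (fun _ =>
    pA (m (k + 1) (Fin.insertNth pos eA (fun j => iV (vs j)))))]
  by_cases hmem : PTree.node (List.replicate (k + 1) PTree.leaf) ∈ 𝒯
  · rw [if_pos hmem]
  · rw [if_neg hmem]
    have hk0 : k = 0 := by
      by_contra hk
      apply hmem
      rw [h𝒯]
      refine ⟨?_, ?_, _, rfl⟩
      · simp [goodL_replicate]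
        omega
      · simp only [nleaves_node]
        rw [nleavesL_leaves _ (fun c hcm => List.eq_of_mem_replicate hcm)]
        simp
    subst hk0
    rw [hunit_k 1 _ pos (by omega) (by simp), map_zero]

/-- Under the side conditions `p∘i = id`, `H∘i = 0`, `p∘H = 0`, `H² = 0` for homotopy
data `(i, p, H)` between a unital A∞-algebra `(A, m)` and a complex `(V, d)`, and
assuming `i(e_V) = e_A`, the transferred A∞-operations
`η_k = Σ_{T} η_T` (sums over planar trees with all internal valencies `≥ 2`,
assigning `m_{val(v)}` to internal vertices, `H` to internal edges, `i` to leaves and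
`p` to the root) satisfy
`η_{k+1}(v₁, …, e_V, …, v_k) = p(m_{k+1}(i(v₁), …, e_A, …, i(v_k)))`;
in particular `e_V` is a strict unit for the transferred structure. -/
theorem stmt9 {V A : Type*} [AddCommGroup V] [AddCommGroup A]
    (m : ∀ k : ℕ, (Fin k → A) → A) (g : A → ℤ)
    (iV : V →+ A) (pA : A →+ V) (Hh : A →+ A) (dV : V →+ V)
    (eA : A) (eV : V)
    -- `m` is multilinear (additive in each slot)
    (hm_add : ∀ (k : ℕ) (x : Fin k → A) (i : Fin k) (a b : A),
      m k (Function.update x i (a + b)) =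
        m k (Function.update x i a) + m k (Function.update x i b))
    -- `e_A` is a strict unit of `(A, m)`
    (hunit_l : ∀ a : A, m 2 ![eA, a] = a)
    (hunit_r : ∀ a : A, m 2 ![a, eA] = (Int.negOnePow (g a) : ℤ) • a)
    (hunit_k : ∀ (k : ℕ) (x : Fin k → A) (i : Fin k), k ≠ 2 → x i = eA → m k x = 0)
    -- homotopy data
    (hie : iV eV = eA)
    (hhtpy : ∀ a : A, iV (pA a) - a = m 1 ![Hh a] + Hh (m 1 ![a]))
    (hichain : ∀ v : V, iV (dV v) = m 1 ![iV v])
    (hpchain : ∀ a : A, dV (pA a) = pA (m 1 ![a]))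
    -- side conditions
    (hpi : ∀ v : V, pA (iV v) = v)
    (hHi : ∀ v : V, Hh (iV v) = 0)
    (hpH : ∀ a : A, pA (Hh a) = 0)
    (hHH : ∀ a : A, Hh (Hh a) = 0)
    -- the (finite) set of trees with `k+1` leaves defining `η_{k+1}`
    (k : ℕ) (𝒯 : Finset PTree)
    (h𝒯 : ∀ t : PTree, t ∈ 𝒯 ↔
      (t.good = true ∧ t.nleaves = k + 1 ∧ ∃ ts, t = PTree.node ts))
    (vs : Fin k → V) (pos : Fin (k + 1)) :
    (∑ t ∈ 𝒯, pA (PTree.evalT m (⇑iV) (⇑Hh) t (List.ofFn (Fin.insertNth pos eV vs)))) =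
      pA (m (k + 1) (Fin.insertNth pos eA (fun j => iV (vs j)))) ∧
    (k ≠ 1 →
      (∑ t ∈ 𝒯, pA (PTree.evalT m (⇑iV) (⇑Hh) t (List.ofFn (Fin.insertNth pos eV vs)))) = 0) := by
  have h1 := stmt9' m g iV pA Hh dV eA eV hm_add hunit_l hunit_r hunit_k hie hpi hHi hpH
    hHH k 𝒯 h𝒯 vs pos
  refine ⟨h1, fun hk1 => ?_⟩
  rw [h1, hunit_k (k + 1) _ pos (by omega) (by simp), map_zero]
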